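/- For every integer m ≥ 1, the sequence n ↦ t(n, m) / (n²/2) converges to 1 - 1/m as n → ∞. -/

import Mathlib

open Finset

/-- Number of edges of the Turán graph `𝒯(n, m)`. -/
noncomputable def turanEdges (n m : ℕ) : ℕ :=
  (SimpleGraph.turanGraph n m).edgeFinset.card

lemma fin_card_eq (n m i : ℕ) :
    (Finset.univ.filter (fun w : Fin n => (w : ℕ) % m = i)).card
      = ((Finset.range n).filter (fun w => w % m = i)).card := by
  simp only [Finset.card_filter]
  rw [Fin.sum_univ_eq_sum_range (fun w => if w % m = i then 1 else 0)]

lemma count_c (n m i : ℕ) (hm : 0 < m) (hi : i < m) :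
    ((Finset.range n).filter (fun w => w % m = i)).card
      = n / m + if i < n % m then 1 else 0 := by
  have h := Nat.count_modEq_card n hm i
  rw [Nat.count_eq_card_filter_range, Nat.mod_eq_of_lt hi] at h
  rw [← h]
  congr 1
  ext w
  simp [Nat.ModEq, Nat.mod_eq_of_lt hi, eq_comm]

lemma key (n m : ℕ) (hm : 0 < m) :
    2 * turanEdges n m + (m * (n/m)^2 + (2*(n/m)+1) * (n%m)) = n^2 := by
  classical
  set q := n / m with hq
  set s := n % m with hs
  set c : ℕ → ℕ := fun i => ((Finset.range n).filter (fun w => w % m = i)).card with hc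
  have hdeg : ∀ v : Fin n, (SimpleGraph.turanGraph n m).degree v = n - c ((v : ℕ) % m) := by
    intro v
    rw [← SimpleGraph.card_neighborFinset_eq_degree]
    have hnb : (SimpleGraph.turanGraph n m).neighborFinset v
        = Finset.univ.filter (fun w : Fin n => ¬ ((w : ℕ) % m = (v : ℕ) % m)) := by
      ext w
      rw [SimpleGraph.mem_neighborFinset]
      simp [SimpleGraph.turanGraph_adj, Fin.ext_iff, eq_comm]
    rw [hnb, Finset.filter_not, Finset.card_sdiff_of_subset (Finset.filter_subset _ _),
      Finset.card_univ, Fintype.card_fin, fin_card_eq]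
  have hsum := SimpleGraph.sum_degrees_eq_twice_card_edges (SimpleGraph.turanGraph n m)
  have hle : ∀ v : Fin n, c ((v : ℕ) % m) ≤ n := by
    intro v
    exact le_trans (Finset.card_filter_le _ _) (by simp)
  have hfib : ∑ v ∈ Finset.range n, c (v % m) = ∑ i ∈ Finset.range m, c i * c i := by
    rw [← Finset.sum_fiberwise_of_maps_to (fun x _ => Finset.mem_range.mpr (Nat.mod_lt _ hm))
      (fun v => c (v % m))]
    refine Finset.sum_congr rfl fun i hi => ?_
    calc ∑ x ∈ (Finset.range n).filter (fun x => x % m = i), c (x % m)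
        = ∑ x ∈ (Finset.range n).filter (fun x => x % m = i), c i :=
          Finset.sum_congr rfl fun x hx => by rw [(Finset.mem_filter.mp hx).2]
      _ = c i * c i := by rw [Finset.sum_const, smul_eq_mul]
  have hsum2 : ∑ v : Fin n, c ((v : ℕ) % m) = ∑ i ∈ Finset.range m, c i * c i := by
    rw [Fin.sum_univ_eq_sum_range (fun v => c (v % m))]; exact hfib
  have hci : ∀ i ∈ Finset.range m, c i * c i
      = (q + if i < s then 1 else 0) * (q + if i < s then 1 else 0) := by
    intro i hi
    rw [hc]; simp only
    rw [count_c n m i hm (Finset.mem_range.mp hi)]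
  have hsq : ∑ i ∈ Finset.range m, c i * c i = m * q^2 + (2*q+1) * s := by
    rw [Finset.sum_congr rfl hci]
    have hsm : s ≤ m := le_of_lt (Nat.mod_lt _ hm)
    rw [Finset.range_eq_Ico, ← Finset.sum_Ico_consecutive _ (Nat.zero_le s) hsm]
    have h1 : ∑ i ∈ Finset.Ico 0 s, (q + if i < s then 1 else 0) * (q + if i < s then 1 else 0)
        = s * ((q+1) * (q+1)) := by
      calc ∑ i ∈ Finset.Ico 0 s, (q + if i < s then 1 else 0) * (q + if i < s then 1 else 0)
          = ∑ _i ∈ Finset.Ico 0 s, (q+1) * (q+1) :=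
            Finset.sum_congr rfl fun i hi => by rw [if_pos (Finset.mem_Ico.mp hi).2]
        _ = s * ((q+1) * (q+1)) := by simp [Finset.sum_const, Nat.card_Ico]
    have h2 : ∑ i ∈ Finset.Ico s m, (q + if i < s then 1 else 0) * (q + if i < s then 1 else 0)
        = (m - s) * (q * q) := by
      calc ∑ i ∈ Finset.Ico s m, (q + if i < s then 1 else 0) * (q + if i < s then 1 else 0)
          = ∑ _i ∈ Finset.Ico s m, q * q :=
            Finset.sum_congr rfl fun i hi => by
              rw [if_neg (by have := (Finset.mem_Ico.mp hi).1; omega)]; ring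
        _ = (m - s) * (q * q) := by simp [Finset.sum_const, Nat.card_Ico]
    rw [h1, h2]
    zify [hsm]
    ring
  have htot : ∑ v : Fin n, ((SimpleGraph.turanGraph n m).degree v + c ((v : ℕ) % m)) = n * n := by
    calc ∑ v : Fin n, ((SimpleGraph.turanGraph n m).degree v + c ((v : ℕ) % m))
        = ∑ _v : Fin n, n :=
          Finset.sum_congr rfl fun v _ => by rw [hdeg v, Nat.sub_add_cancel (hle v)]
      _ = n * n := by simp [Finset.sum_const, Finset.card_univ]
  rw [Finset.sum_add_distrib, hsum, hsum2, hsq] at htot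
  have : 2 * (SimpleGraph.turanGraph n m).edgeFinset.card = 2 * turanEdges n m := rfl
  rw [this] at htot
  nlinarith [htot]

/-- For `m ≥ 1`, `t(n, m) / (n²/2) → 1 - 1/m` as `n → ∞`. -/
theorem turan_density (m : ℕ) (hm : 1 ≤ m) :
    Filter.Tendsto (fun n : ℕ => (turanEdges n m : ℝ) / ((n : ℝ) ^ 2 / 2))
      Filter.atTop (nhds (1 - 1 / (m : ℝ))) := by
  have hm0 : (0:ℝ) < m := by exact_mod_cast hm
  set e : ℕ → ℝ := fun n =>
    ((n % m : ℕ) : ℝ) * ((m : ℝ) - ((n % m : ℕ) : ℝ)) / ((m : ℝ) * (n : ℝ)^2) with he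
  have heq : ∀ n : ℕ, 1 ≤ n →
      (turanEdges n m : ℝ) / ((n : ℝ) ^ 2 / 2) = (1 - 1 / (m : ℝ)) - e n := by
    intro n hn
    have hkey := key n m hm
    have hnm := Nat.div_add_mod n m
    have hcast : 2 * (turanEdges n m : ℝ)
        + ((m : ℝ) * ((n / m : ℕ) : ℝ)^2 + (2*((n / m : ℕ) : ℝ)+1) * ((n % m : ℕ) : ℝ))
        = (n : ℝ)^2 := by exact_mod_cast congrArg (Nat.cast : ℕ → ℝ) hkey
    set q : ℝ := ((n / m : ℕ) : ℝ) with hqd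
    set s : ℝ := ((n % m : ℕ) : ℝ) with hsd
    have hn0 : (0:ℝ) < (n:ℝ) := by exact_mod_cast hn
    have hn' : (n:ℝ) = (m:ℝ)*q + s := by
      rw [hqd, hsd]; exact_mod_cast hnm.symm
    have ht : (turanEdges n m : ℝ) = ((n:ℝ)^2 - ((m:ℝ)*q^2 + (2*q+1)*s))/2 := by
      linarith [hcast]
    have hne : (m:ℝ)*q + s ≠ 0 := by rw [← hn']; positivity
    rw [he]; simp only
    rw [ht, hn']
    field_simp
    ring
  have he0 : ∀ n : ℕ, 1 ≤ n → 0 ≤ e n := by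
    intro n hn
    have hs : ((n % m : ℕ) : ℝ) ≤ m := by
      exact_mod_cast (Nat.mod_lt _ hm).le
    have hn0 : (0:ℝ) < (n:ℝ) := by exact_mod_cast hn
    apply div_nonneg
    · have : (0:ℝ) ≤ ((n % m : ℕ) : ℝ) := by positivity
      nlinarith
    · positivity
  have heb : ∀ n : ℕ, 1 ≤ n → e n ≤ (m : ℝ) / n := by
    intro n hn
    have hs0 : (0:ℝ) ≤ ((n % m : ℕ) : ℝ) := by positivity
    have hs : ((n % m : ℕ) : ℝ) ≤ m := by exact_mod_cast (Nat.mod_lt _ hm).le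
    have hn1 : (1:ℝ) ≤ (n:ℝ) := by exact_mod_cast hn
    rw [div_le_div_iff₀ (by positivity) (by positivity)]
    have h1 : ((n % m : ℕ) : ℝ) * ((m:ℝ) - ((n % m : ℕ) : ℝ)) ≤ (m:ℝ) * m := by nlinarith
    nlinarith [h1, hn1, sq_nonneg ((n:ℝ) - 1)]
  have hetend : Filter.Tendsto e Filter.atTop (nhds 0) := by
    apply squeeze_zero' (Filter.eventually_atTop.mpr ⟨1, he0⟩)
      (Filter.eventually_atTop.mpr ⟨1, heb⟩)
    exact tendsto_const_div_atTop_nhds_zero_nat (m : ℝ)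
  have : Filter.Tendsto (fun n => (1 - 1 / (m : ℝ)) - e n) Filter.atTop
      (nhds ((1 - 1 / (m : ℝ)) - 0)) := tendsto_const_nhds.sub hetend
  rw [sub_zero] at this
  apply this.congr'
  filter_upwards [Filter.eventually_atTop.mpr ⟨1, fun n hn => heq n hn⟩] with n h
  rw [h]
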